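/- Let W be a d-dimensional Brownian motion and β ∈ M^d. Then almost surely liminf_{t↘0} (1/t)|W(t)ᵀ β W(t)| = 0. -/

import Mathlib

open MeasureTheory ProbabilityTheory Filter Real
open scoped RealInnerProductSpace NNReal ENNReal Topology

noncomputable section

/-- One-dimensional standard Brownian motion: starts at zero, continuous paths, Gaussian
increments, independent increments. -/
def IsBM {Ω : Type*} [MeasureSpace Ω] (W : ℝ → Ω → ℝ) : Prop :=
  (∀ ω, W 0 ω = 0) ∧
  (∀ ω, Continuous fun t => W t ω) ∧
  (∀ t, Measurable (W t)) ∧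
  (∀ s t : ℝ, 0 ≤ s → s ≤ t →
    Measure.map (fun ω => W t ω - W s ω) ℙ = gaussianReal 0 ((t - s).toNNReal)) ∧
  (∀ (n : ℕ) (t : ℕ → ℝ), Monotone t → (∀ i, 0 ≤ t i) →
    iIndepFun
      (fun i : Fin n => fun ω => W (t (i + 1)) ω - W (t i) ω) ℙ)

/-- `d`-dimensional standard Brownian motion: independent coordinate Brownian motions. -/
def IsBMVec {Ω : Type*} [MeasureSpace Ω] (d : ℕ)
    (W : ℝ → Ω → EuclideanSpace ℝ (Fin d)) : Prop :=
  (∀ i : Fin d, IsBM fun t ω => W t ω i) ∧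
  iIndepFun (fun (i : Fin d) (ω : Ω) => fun t : ℝ => W t ω i) ℙ

/-- Apply a `d×d` matrix to a Euclidean vector. -/
def eApply {d : ℕ} (β : Matrix (Fin d) (Fin d) ℝ) (y : EuclideanSpace ℝ (Fin d)) :
    EuclideanSpace ℝ (Fin d) :=
  (WithLp.equiv 2 (Fin d → ℝ)).symm (β.mulVec ((WithLp.equiv 2 (Fin d → ℝ)) y))

/-- Operator norm `|β| = sup_{|y|=1} |βy|` of a `d×d` matrix. -/
def opNorm {d : ℕ} (β : Matrix (Fin d) (Fin d) ℝ) : ℝ :=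
  ‖Matrix.toEuclideanCLM (𝕜 := ℝ) β‖

/-- Largest eigenvalue `λ*(β) = max_{|y|=1} yᵀ β y` of a symmetric matrix. -/
def lamStar {d : ℕ} (β : Matrix (Fin d) (Fin d) ℝ) : ℝ :=
  ⨆ y : Metric.sphere (0 : EuclideanSpace ℝ (Fin d)) 1,
    ⟪(y : EuclideanSpace ℝ (Fin d)), eApply β y⟫

/-- The function `h(t) = 2t log log (1/t)`. -/
def hll (t : ℝ) : ℝ := 2 * t * Real.log (Real.log (1 / t))

lemma measurableSet_abs_le (r : ℝ) : MeasurableSet {x : ℝ | |x| ≤ r} :=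
  measurableSet_le (measurable_id.abs) measurable_const

lemma measurableSet_abs_ge (u : ℝ) : MeasurableSet {x : ℝ | u ≤ |x|} :=
  measurableSet_le measurable_const (measurable_id.abs)

lemma gauss_scale (v : ℝ≥0) (hv : v ≠ 0) (s : Set ℝ) (hs : MeasurableSet s) :
    gaussianReal 0 v s = gaussianReal 0 1 ((fun x => Real.sqrt v * x) ⁻¹' s) := by
  have hc : (0:ℝ) < Real.sqrt v := Real.sqrt_pos.2 (by exact_mod_cast pos_iff_ne_zero.2 hv)
  have hmap := gaussianReal_map_const_mul (μ := 0) (v := 1) (Real.sqrt v)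
  have hv' : (⟨(Real.sqrt v)^2, sq_nonneg _⟩ * 1 : ℝ≥0) = v := by
    apply NNReal.eq
    show (Real.sqrt v)^2 * 1 = (v:ℝ)
    rw [mul_one, Real.sq_sqrt v.coe_nonneg]
  rw [mul_zero] at hmap
  rw [show gaussianReal 0 v = Measure.map (fun x => Real.sqrt v * x) (gaussianReal 0 1) by
    rw [hmap]; congr 1; exact hv'.symm]
  rw [Measure.map_apply (measurable_const_mul _) hs]

lemma gauss_abs_le_scale (v : ℝ≥0) (hv : v ≠ 0) (r : ℝ) :
    gaussianReal 0 v {x : ℝ | |x| ≤ r} = gaussianReal 0 1 {x : ℝ | |x| ≤ r / Real.sqrt v} := by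
  have hc : (0:ℝ) < Real.sqrt v := Real.sqrt_pos.2 (by exact_mod_cast pos_iff_ne_zero.2 hv)
  rw [gauss_scale v hv _ (measurableSet_abs_le r)]
  congr 1
  ext x
  simp only [Set.mem_preimage, Set.mem_setOf_eq, abs_mul, abs_of_pos hc]
  rw [le_div_iff₀ hc, mul_comm]

lemma gauss_abs_ge_scale (v : ℝ≥0) (hv : v ≠ 0) (u : ℝ) :
    gaussianReal 0 v {x : ℝ | u ≤ |x|} = gaussianReal 0 1 {x : ℝ | u / Real.sqrt v ≤ |x|} := by
  have hc : (0:ℝ) < Real.sqrt v := Real.sqrt_pos.2 (by exact_mod_cast pos_iff_ne_zero.2 hv)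
  rw [gauss_scale v hv _ (measurableSet_abs_ge u)]
  congr 1
  ext x
  simp only [Set.mem_preimage, Set.mem_setOf_eq, abs_mul, abs_of_pos hc]
  rw [div_le_iff₀ hc, mul_comm]

lemma gauss_abs_le_pos (b : ℝ) (hb : 0 < b) : 0 < gaussianReal 0 1 {x : ℝ | |x| ≤ b} := by
  rw [gaussianReal_apply 0 one_ne_zero]
  have hsub : ∀ x ∈ Set.Icc (-b) b, (ENNReal.ofReal ((Real.sqrt (2*π))⁻¹ * rexp (-b^2/2)) : ℝ≥0∞)
      ≤ gaussianPDF 0 1 x := by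
    intro x hx
    rw [gaussianPDF]
    apply ENNReal.ofReal_le_ofReal
    rw [gaussianPDFReal]
    have hxb : |x| ≤ b := abs_le.2 ⟨hx.1, hx.2⟩
    have hsq : x ^ 2 ≤ b ^ 2 := by
      have := pow_le_pow_left₀ (abs_nonneg x) hxb 2
      simpa [sq_abs] using this
    simp only [NNReal.coe_one, mul_one, sub_zero]
    apply mul_le_mul_of_nonneg_left _ (by positivity)
    apply Real.exp_le_exp.2
    rw [div_le_div_iff_of_pos_right (by norm_num : (0:ℝ) < 2)]
    linarith
  calc (0:ℝ≥0∞) < ENNReal.ofReal ((Real.sqrt (2*π))⁻¹ * rexp (-b^2/2)) * volume (Set.Icc (-b) b) := by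
        rw [Real.volume_Icc]
        apply ENNReal.mul_pos
        · simp only [ne_eq, ENNReal.ofReal_eq_zero, not_le]
          positivity
        · simp only [ne_eq, ENNReal.ofReal_eq_zero, not_le]
          linarith
    _ ≤ ∫⁻ x in Set.Icc (-b) b, gaussianPDF 0 1 x := by
        rw [← setLIntegral_const]
        exact setLIntegral_mono (measurable_gaussianPDF 0 1) hsub
    _ ≤ ∫⁻ x in {x : ℝ | |x| ≤ b}, gaussianPDF 0 1 x := by
        apply lintegral_mono_set
        intro x hx
        simp only [Set.mem_setOf_eq]
        exact abs_le.2 ⟨hx.1, hx.2⟩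

def gaussK : ℝ := ∫ x : ℝ, rexp (-x^2/4)

lemma gaussK_nonneg : 0 ≤ gaussK := integral_nonneg (fun x => (Real.exp_pos _).le)

lemma integrable_exp_quarter : Integrable (fun x : ℝ => rexp (-x^2/4)) := by
  have h := integrable_exp_neg_mul_sq (by norm_num : (0:ℝ) < 1/4)
  convert h using 2 with x
  ring_nf

lemma gauss_tail (u : ℝ) (hu : 0 ≤ u) :
    gaussianReal 0 1 {x : ℝ | u ≤ |x|} ≤ ENNReal.ofReal (gaussK * rexp (-u^2/4)) := by
  rw [gaussianReal_apply 0 one_ne_zero]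
  have hpt : ∀ x ∈ {x : ℝ | u ≤ |x|},
      gaussianPDF 0 1 x ≤ ENNReal.ofReal (rexp (-u^2/4) * rexp (-x^2/4)) := by
    intro x hx
    rw [gaussianPDF]
    apply ENNReal.ofReal_le_ofReal
    rw [gaussianPDFReal]
    have h1 : ((Real.sqrt (2*π*(1:ℝ≥0)))⁻¹ : ℝ) ≤ 1 := by
      rw [inv_le_one_iff₀]
      right
      rw [show ((1:ℝ≥0):ℝ) = 1 by norm_num, mul_one]
      refine Real.one_le_sqrt.2 ?_
      nlinarith [Real.pi_gt_three]
    have hx2 : u^2 ≤ x^2 := by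
      have : u ≤ |x| := hx
      nlinarith [abs_nonneg x, sq_abs x]
    have h2 : rexp (-(x-0)^2/(2*(1:ℝ≥0))) ≤ rexp (-u^2/4) * rexp (-x^2/4) := by
      rw [← Real.exp_add]
      apply Real.exp_le_exp.2
      push_cast
      rw [sub_zero]
      linarith
    calc (Real.sqrt (2*π*(1:ℝ≥0)))⁻¹ * rexp (-(x-0)^2/(2*(1:ℝ≥0)))
        ≤ 1 * (rexp (-u^2/4) * rexp (-x^2/4)) :=
          mul_le_mul h1 h2 (Real.exp_pos _).le zero_le_one
      _ = rexp (-u^2/4) * rexp (-x^2/4) := one_mul _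
  calc ∫⁻ x in {x : ℝ | u ≤ |x|}, gaussianPDF 0 1 x
      ≤ ∫⁻ x in {x : ℝ | u ≤ |x|}, ENNReal.ofReal (rexp (-u^2/4) * rexp (-x^2/4)) :=
        setLIntegral_mono (by measurability) hpt
    _ ≤ ∫⁻ x, ENNReal.ofReal (rexp (-u^2/4) * rexp (-x^2/4)) := setLIntegral_le_lintegral _ _
    _ = ENNReal.ofReal (∫ x : ℝ, rexp (-u^2/4) * rexp (-x^2/4)) := by
        rw [← ofReal_integral_eq_lintegral_ofReal (integrable_exp_quarter.const_mul _)
          (ae_of_all _ (fun x => by positivity))]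
    _ = ENNReal.ofReal (gaussK * rexp (-u^2/4)) := by
        rw [MeasureTheory.integral_const_mul, gaussK, mul_comm]

lemma tsum_ofReal_geom_ne_top (K r : ℝ) (hr0 : 0 ≤ r) (hr1 : r < 1) :
    ∑' n : ℕ, ENNReal.ofReal (K * r^n) ≠ ∞ := by
  have h : ∀ n : ℕ, ENNReal.ofReal (K * r^n) = ENNReal.ofReal K * (ENNReal.ofReal r)^n := by
    intro n
    rw [ENNReal.ofReal_mul' (pow_nonneg hr0 n), ENNReal.ofReal_pow hr0]
  simp_rw [h]
  rw [ENNReal.tsum_mul_left, ENNReal.tsum_geometric]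
  apply ENNReal.mul_ne_top ENNReal.ofReal_ne_top
  rw [ENNReal.inv_ne_top]
  simp only [ne_eq, tsub_eq_zero_iff_le, not_le]
  exact_mod_cast ENNReal.ofReal_lt_one.2 hr1

/-! ### The time sequence -/

def bmT (n : ℕ) : ℝ := rexp (-(n:ℝ)^2)

def bmS (n : ℕ) : ℝ := rexp (-(n:ℝ)^2/2)

lemma bmT_pos (n : ℕ) : 0 < bmT n := Real.exp_pos _

lemma bmS_pos (n : ℕ) : 0 < bmS n := Real.exp_pos _

lemma bmS_eq_sqrt (n : ℕ) : bmS n = Real.sqrt (bmT n) := Real.exp_half _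

lemma bmS_sq (n : ℕ) : bmS n ^ 2 = bmT n := by
  rw [bmS_eq_sqrt, Real.sq_sqrt (bmT_pos n).le]

lemma bmT_anti : Antitone bmT := by
  intro n m h
  apply Real.exp_le_exp.2
  apply neg_le_neg
  exact pow_le_pow_left₀ (Nat.cast_nonneg n) (Nat.cast_le.2 h) 2

lemma bmT_strict (n : ℕ) : bmT (n+1) < bmT n := by
  apply Real.exp_lt_exp.2
  apply neg_lt_neg
  have : (n:ℝ) < (n+1:ℕ) := by exact_mod_cast Nat.lt_succ_self n
  apply pow_lt_pow_left₀ this (Nat.cast_nonneg n) two_ne_zero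

lemma bmS_ratio (n : ℕ) : bmS n / bmS (n+1) = rexp ((2*(n:ℝ)+1)/2) := by
  rw [bmS, bmS, ← Real.exp_sub]
  congr 1
  push_cast
  ring

attribute [irreducible] bmT bmS

section Events

variable {Ω : Type*} [MeasureSpace Ω] {d : ℕ}

/-- Good increment event. -/
def Eev (W : ℝ → Ω → EuclideanSpace ℝ (Fin d)) (b : ℝ) (i : Fin d) (n : ℕ) : Set Ω :=
  {ω | |W (bmT n) ω i - W (bmT (n+1)) ω i| ≤ b * bmS n}

/-- Bad event. -/
def Fev (W : ℝ → Ω → EuclideanSpace ℝ (Fin d)) (b : ℝ) (i : Fin d) (n : ℕ) : Set Ω :=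
  {ω | b * bmS n < |W (bmT (n+1)) ω i|}

def Bset (W : ℝ → Ω → EuclideanSpace ℝ (Fin d)) (b : ℝ) (n : ℕ) : Set Ω :=
  ⋂ i : Fin d, Eev W b i n

def Cset (W : ℝ → Ω → EuclideanSpace ℝ (Fin d)) (b : ℝ) (n : ℕ) : Set Ω :=
  ⋃ i : Fin d, Fev W b i n

variable {W : ℝ → Ω → EuclideanSpace ℝ (Fin d)}

lemma measW (hW : IsBMVec d W) (t : ℝ) (i : Fin d) : Measurable fun ω => W t ω i :=
  (hW.1 i).2.2.1 t

lemma measE (hW : IsBMVec d W) (b : ℝ) (i : Fin d) (n : ℕ) : MeasurableSet (Eev W b i n) :=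
  measurableSet_le (((measW hW _ i).sub (measW hW _ i)).abs) measurable_const

lemma measF (hW : IsBMVec d W) (b : ℝ) (i : Fin d) (n : ℕ) : MeasurableSet (Fev W b i n) :=
  measurableSet_lt measurable_const ((measW hW _ i).abs)

lemma measB (hW : IsBMVec d W) (b : ℝ) (n : ℕ) : MeasurableSet (Bset W b n) :=
  MeasurableSet.iInter fun i => measE hW b i n

lemma measC (hW : IsBMVec d W) (b : ℝ) (n : ℕ) : MeasurableSet (Cset W b n) :=
  MeasurableSet.iUnion fun i => measF hW b i n

/-- Product formula within one coordinate. -/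
lemma prodE (hW : IsBMVec d W) (b : ℝ) (i : Fin d) (S : Finset ℕ) :
    ℙ (⋂ n ∈ S, Eev W b i n) = ∏ n ∈ S, ℙ (Eev W b i n) := by
  classical
  set N : ℕ := S.sup id + 1 with hNdef
  have hNlt : ∀ n ∈ S, n < N := fun n hn => Nat.lt_succ_of_le (Finset.le_sup (f := id) hn)
  set τ : ℕ → ℝ := fun m => bmT (N - m) with hτdef
  have hτ : Monotone τ := fun m m' h => bmT_anti (Nat.sub_le_sub_left h N)
  have hind := (hW.1 i).2.2.2.2 N τ hτ (fun m => (bmT_pos _).le)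
  set Y : Fin N → Ω → ℝ := fun j => fun ω => W (τ (↑j + 1)) ω i - W (τ ↑j) ω i with hY
  set A : Fin N → Set ℝ := fun j => {x : ℝ | |x| ≤ b * bmS (N - 1 - (j:ℕ))} with hA
  have hψlt : ∀ n : ℕ, N - 1 - n < N := fun n => by omega
  set ψ : ℕ → Fin N := fun n => ⟨N - 1 - n, hψlt n⟩ with hψ
  have key : ∀ n ∈ S, Y (ψ n) ⁻¹' A (ψ n) = Eev W b i n := by
    intro n hn
    have hn' := hNlt n hn
    have h1 : N - (N - 1 - n + 1) = n := by omega
    have h2 : N - (N - 1 - n) = n + 1 := by omega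
    have h3 : N - 1 - (N - 1 - n) = n := by omega
    show (fun ω => W (bmT (N - (N - 1 - n + 1))) ω i - W (bmT (N - (N - 1 - n))) ω i) ⁻¹'
      {x : ℝ | |x| ≤ b * bmS (N - 1 - (N - 1 - n))} = Eev W b i n
    rw [h1, h2, h3]
    rfl
  have hψinj : Set.InjOn ψ ↑S := by
    intro n hn m hm hnm
    have h1 := hNlt n hn
    have h2 := hNlt m hm
    have h3 : N - 1 - n = N - 1 - m := congrArg Fin.val hnm
    omega
  have hbi : ⋂ n ∈ S, Eev W b i n = ⋂ j ∈ S.image ψ, Y j ⁻¹' A j := by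
    ext ω
    simp only [Set.mem_iInter, Finset.mem_image]
    constructor
    · rintro h j ⟨n, hn, rfl⟩
      rw [key n hn]
      exact h n hn
    · intro h n hn
      rw [← key n hn]
      exact h (ψ n) ⟨n, hn, rfl⟩
  have hprod := hind.measure_inter_preimage_eq_mul (S.image ψ) (sets := A)
    (fun j _ => measurableSet_abs_le _)
  rw [hbi, hprod, Finset.prod_image (fun n hn m hm h => hψinj hn hm h)]
  exact Finset.prod_congr rfl fun n hn => by rw [key n hn]

/-- Product formula across coordinates. -/
lemma prodCoord [IsProbabilityMeasure (ℙ : Measure Ω)]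
    (hW : IsBMVec d W) (b : ℝ) (S : Finset ℕ) :
    ℙ (⋂ i : Fin d, ⋂ n ∈ S, Eev W b i n) = ∏ i : Fin d, ℙ (⋂ n ∈ S, Eev W b i n) := by
  classical
  set G : Fin d → Set (ℝ → ℝ) :=
    fun _ => ⋂ n ∈ S, {g : ℝ → ℝ | |g (bmT n) - g (bmT (n+1))| ≤ b * bmS n} with hG
  have hGm : ∀ i, MeasurableSet (G i) := fun i =>
    Finset.measurableSet_biInter S fun n _ =>
      measurableSet_le (((measurable_pi_apply (bmT n)).sub (measurable_pi_apply (bmT (n+1)))).abs)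
        measurable_const
  have hpre : ∀ i : Fin d, (fun ω => fun t : ℝ => W t ω i) ⁻¹' G i = ⋂ n ∈ S, Eev W b i n := by
    intro i
    ext ω
    simp [G, Eev]
  have h := hW.2.measure_inter_preimage_eq_mul (Finset.univ) (sets := G) (fun i _ => hGm i)
  simp only [Finset.mem_univ, Set.iInter_true] at h
  calc ℙ (⋂ i : Fin d, ⋂ n ∈ S, Eev W b i n)
      = ℙ (⋂ i : Fin d, (fun ω => fun t : ℝ => W t ω i) ⁻¹' G i) := by
        congr 1
        exact Set.iInter_congr fun i => (hpre i).symm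
    _ = ∏ i : Fin d, ℙ ((fun ω => fun t : ℝ => W t ω i) ⁻¹' G i) := h
    _ = ∏ i : Fin d, ℙ (⋂ n ∈ S, Eev W b i n) :=
        Finset.prod_congr rfl fun i _ => by rw [hpre i]

lemma prob_Bset [IsProbabilityMeasure (ℙ : Measure Ω)]
    (hW : IsBMVec d W) (b : ℝ) (n : ℕ) :
    ℙ (Bset W b n) = ∏ i : Fin d, ℙ (Eev W b i n) := by
  classical
  have := prodCoord hW b {n}
  simpa [Bset] using this

lemma indepB [IsProbabilityMeasure (ℙ : Measure Ω)] (hW : IsBMVec d W) (b : ℝ) :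
    iIndepSet (Bset W b) ℙ := by
  classical
  rw [iIndepSet_iff_meas_biInter (fun n => measB hW b n)]
  intro S
  have h1 : ⋂ n ∈ S, Bset W b n = ⋂ i : Fin d, ⋂ n ∈ S, Eev W b i n := by
    ext ω
    simp only [Set.mem_iInter, Bset]
    tauto
  rw [h1, prodCoord hW b S]
  calc ∏ i : Fin d, ℙ (⋂ n ∈ S, Eev W b i n)
      = ∏ i : Fin d, ∏ n ∈ S, ℙ (Eev W b i n) :=
        Finset.prod_congr rfl fun i _ => prodE hW b i S
    _ = ∏ n ∈ S, ∏ i : Fin d, ℙ (Eev W b i n) := Finset.prod_comm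
    _ = ∏ n ∈ S, ℙ (Bset W b n) :=
        Finset.prod_congr rfl fun n _ => (prob_Bset hW b n).symm

end Events

section Bounds

variable {Ω : Type*} [MeasureSpace Ω] {d : ℕ} {W : ℝ → Ω → EuclideanSpace ℝ (Fin d)}

lemma prob_E_lower (hW : IsBMVec d W) {b : ℝ} (hb : 0 < b) (i : Fin d) (n : ℕ) :
    gaussianReal 0 1 {x : ℝ | |x| ≤ b} ≤ ℙ (Eev W b i n) := by
  have hle : bmT (n+1) ≤ bmT n := (bmT_strict n).le
  have hlaw := (hW.1 i).2.2.2.1 (bmT (n+1)) (bmT n) (bmT_pos _).le hle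
  have hEeq : Eev W b i n
      = (fun ω => W (bmT n) ω i - W (bmT (n+1)) ω i) ⁻¹' {x : ℝ | |x| ≤ b * bmS n} := rfl
  have hmeas : Measurable fun ω => W (bmT n) ω i - W (bmT (n+1)) ω i :=
    (measW hW _ i).sub (measW hW _ i)
  rw [hEeq, ← Measure.map_apply hmeas (measurableSet_abs_le _), hlaw]
  have hvpos : (0:ℝ) < bmT n - bmT (n+1) := sub_pos.2 (bmT_strict n)
  have hv : (bmT n - bmT (n+1)).toNNReal ≠ 0 := by
    simp only [ne_eq, Real.toNNReal_eq_zero, not_le]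
    exact hvpos
  rw [gauss_abs_le_scale _ hv]
  apply measure_mono
  intro x hx
  simp only [Set.mem_setOf_eq] at *
  have hcv : ((((bmT n - bmT (n+1)).toNNReal) : ℝ≥0) : ℝ) = bmT n - bmT (n+1) :=
    Real.coe_toNNReal _ hvpos.le
  have h0v : 0 < Real.sqrt ((bmT n - bmT (n+1)).toNNReal) := by
    apply Real.sqrt_pos.2
    rw [hcv]
    exact hvpos
  have hsv : Real.sqrt ((bmT n - bmT (n+1)).toNNReal) ≤ bmS n := by
    rw [bmS_eq_sqrt]
    apply Real.sqrt_le_sqrt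
    rw [hcv]
    linarith [bmT_pos (n+1)]
  calc |x| ≤ b := hx
    _ ≤ b * bmS n / Real.sqrt ((bmT n - bmT (n+1)).toNNReal) := by
        rw [le_div_iff₀ h0v]
        exact mul_le_mul_of_nonneg_left hsv hb.le

lemma prob_F_upper (hW : IsBMVec d W) {b : ℝ} (hb : 0 < b) (i : Fin d) (n : ℕ) :
    ℙ (Fev W b i n) ≤ ENNReal.ofReal (gaussK * (rexp (-b^2/2))^n) := by
  have hlaw := (hW.1 i).2.2.2.1 0 (bmT (n+1)) le_rfl (bmT_pos _).le
  have hmeas : Measurable fun ω => W (bmT (n+1)) ω i - W 0 ω i :=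
    (measW hW _ i).sub (measW hW _ i)
  have hsub : Fev W b i n
      ⊆ (fun ω => W (bmT (n+1)) ω i - W 0 ω i) ⁻¹' {x : ℝ | b * bmS n ≤ |x|} := by
    intro ω hω
    simp only [Set.mem_preimage, Set.mem_setOf_eq]
    have h0 : W 0 ω i = 0 := (hW.1 i).1 ω
    rw [h0, sub_zero]
    exact le_of_lt hω
  have hv : ((bmT (n+1) - 0).toNNReal) ≠ 0 := by
    simp only [ne_eq, Real.toNNReal_eq_zero, not_le, sub_zero]
    exact bmT_pos _
  have hcv : ((((bmT (n+1) - 0).toNNReal) : ℝ≥0) : ℝ) = bmT (n+1) := by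
    rw [Real.coe_toNNReal _ (by linarith [bmT_pos (n+1)])]
    ring
  have hsq : Real.sqrt ((bmT (n+1) - 0).toNNReal) = bmS (n+1) := by
    rw [bmS_eq_sqrt, hcv]
  have hu : b * bmS n / Real.sqrt ((bmT (n+1) - 0).toNNReal) = b * rexp ((2*(n:ℝ)+1)/2) := by
    rw [hsq, mul_div_assoc, bmS_ratio]
  calc ℙ (Fev W b i n)
      ≤ ℙ ((fun ω => W (bmT (n+1)) ω i - W 0 ω i) ⁻¹' {x : ℝ | b * bmS n ≤ |x|}) :=
        measure_mono hsub
    _ = gaussianReal 0 ((bmT (n+1) - 0).toNNReal) {x : ℝ | b * bmS n ≤ |x|} := by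
        rw [← Measure.map_apply hmeas (measurableSet_abs_ge _), hlaw]
    _ = gaussianReal 0 1 {x : ℝ |
          b * bmS n / Real.sqrt ((bmT (n+1) - 0).toNNReal) ≤ |x|} := gauss_abs_ge_scale _ hv _
    _ = gaussianReal 0 1 {x : ℝ | b * rexp ((2*(n:ℝ)+1)/2) ≤ |x|} := by rw [hu]
    _ ≤ ENNReal.ofReal (gaussK * rexp (-(b * rexp ((2*(n:ℝ)+1)/2))^2/4)) :=
        gauss_tail _ (by positivity)
    _ ≤ ENNReal.ofReal (gaussK * (rexp (-b^2/2))^n) := by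
        apply ENNReal.ofReal_le_ofReal
        apply mul_le_mul_of_nonneg_left _ gaussK_nonneg
        rw [← Real.exp_nat_mul]
        apply Real.exp_le_exp.2
        have hz : (rexp ((2*(n:ℝ)+1)/2))^2 = rexp (2*(n:ℝ)+1) := by
          rw [← Real.exp_nat_mul]
          congr 1
          push_cast
          ring
        rw [mul_pow, hz]
        have hexp := Real.add_one_le_exp (2*(n:ℝ)+1)
        have hb2 : (0:ℝ) ≤ b^2 := sq_nonneg b
        have hn0 : (0:ℝ) ≤ (n:ℝ) := Nat.cast_nonneg n
        nlinarith

lemma prob_Cset (hW : IsBMVec d W) {b : ℝ} (hb : 0 < b) (n : ℕ) :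
    ℙ (Cset W b n) ≤ ENNReal.ofReal ((d * gaussK) * (rexp (-b^2/2))^n) := by
  calc ℙ (Cset W b n) ≤ ∑ i : Fin d, ℙ (Fev W b i n) := measure_iUnion_fintype_le _ _
    _ ≤ ∑ _i : Fin d, ENNReal.ofReal (gaussK * (rexp (-b^2/2))^n) :=
        Finset.sum_le_sum fun i _ => prob_F_upper hW hb i n
    _ = d * ENNReal.ofReal (gaussK * (rexp (-b^2/2))^n) := by
        rw [Finset.sum_const, Finset.card_univ, Fintype.card_fin, nsmul_eq_mul]
    _ = ENNReal.ofReal ((d * gaussK) * (rexp (-b^2/2))^n) := by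
        rw [mul_assoc, ← ENNReal.ofReal_natCast d, ← ENNReal.ofReal_mul (Nat.cast_nonneg d)]

end Bounds

section BC

variable {Ω : Type*} [MeasureSpace Ω] [IsProbabilityMeasure (ℙ : Measure Ω)] {d : ℕ}
  {W : ℝ → Ω → EuclideanSpace ℝ (Fin d)}

lemma ae_frequently_B (hW : IsBMVec d W) {b : ℝ} (hb : 0 < b) :
    ∀ᵐ ω ∂(ℙ : Measure Ω), ∃ᶠ n in atTop, ω ∈ Bset W b n := by
  have hc : 0 < gaussianReal 0 1 {x : ℝ | |x| ≤ b} := gauss_abs_le_pos b hb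
  have hlow : ∀ n, (gaussianReal 0 1 {x : ℝ | |x| ≤ b})^d ≤ ℙ (Bset W b n) := by
    intro n
    rw [prob_Bset hW b n]
    calc (gaussianReal 0 1 {x : ℝ | |x| ≤ b})^d
        = ∏ _i : Fin d, gaussianReal 0 1 {x : ℝ | |x| ≤ b} := by
          rw [Finset.prod_const, Finset.card_univ, Fintype.card_fin]
      _ ≤ ∏ i : Fin d, ℙ (Eev W b i n) := Finset.prod_le_prod' fun i _ => prob_E_lower hW hb i n
  have htop : ∑' n, ℙ (Bset W b n) = ∞ := by
    rw [← top_le_iff]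
    calc (⊤:ℝ≥0∞) = ∑' _n : ℕ, (gaussianReal 0 1 {x : ℝ | |x| ≤ b})^d :=
          (ENNReal.tsum_const_eq_top_of_ne_zero (pow_ne_zero _ hc.ne')).symm
      _ ≤ ∑' n, ℙ (Bset W b n) := ENNReal.tsum_le_tsum hlow
  have h1 := measure_limsup_eq_one (fun n => measB hW b n) (indepB hW b) htop
  have hms : MeasurableSet (limsup (Bset W b) atTop) := by
    rw [limsup_eq_iInf_iSup_of_nat]
    exact MeasurableSet.iInter fun n =>
      MeasurableSet.iUnion fun m => MeasurableSet.iUnion fun _ => measB hW b m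
  have hnull : ℙ (limsup (Bset W b) atTop)ᶜ = 0 := (prob_compl_eq_zero_iff hms).2 h1
  have hmem : ∀ᵐ ω ∂(ℙ : Measure Ω), ω ∈ limsup (Bset W b) atTop := mem_ae_iff.2 hnull
  filter_upwards [hmem] with ω hω
  exact mem_limsup_iff_frequently_mem.1 hω

lemma ae_eventually_notC (hW : IsBMVec d W) {b : ℝ} (hb : 0 < b) :
    ∀ᵐ ω ∂(ℙ : Measure Ω), ∀ᶠ n in atTop, ω ∉ Cset W b n := by
  have hsum : ∑' n, ℙ (Cset W b n) ≠ ∞ := by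
    apply ne_top_of_le_ne_top
      (tsum_ofReal_geom_ne_top (d * gaussK) (rexp (-b^2/2)) (Real.exp_pos _).le
        (Real.exp_lt_one_iff.2 (by nlinarith [pow_pos hb 2])))
    exact ENNReal.tsum_le_tsum fun n => prob_Cset hW hb n
  have h0 := measure_limsup_atTop_eq_zero hsum
  have hae : ∀ᵐ ω ∂(ℙ : Measure Ω), ω ∉ limsup (Cset W b) atTop := by
    rw [ae_iff]
    simpa [not_not, Set.setOf_mem_eq] using h0
  filter_upwards [hae] with ω hω
  have hnf : ¬ ∃ᶠ n in atTop, ω ∈ Cset W b n :=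
    fun h => hω (mem_limsup_iff_frequently_mem.2 h)
  exact Filter.not_frequently.1 hnf

end BC

section Deterministic

lemma norm_sq_le_of_coords {d : ℕ} {y : EuclideanSpace ℝ (Fin d)} {r : ℝ}
    (h : ∀ i, |y i| ≤ r) : ‖y‖^2 ≤ d * r^2 := by
  rw [EuclideanSpace.norm_eq, Real.sq_sqrt (Finset.sum_nonneg fun i _ => sq_nonneg _)]
  calc ∑ i : Fin d, ‖y i‖^2 ≤ ∑ _i : Fin d, r^2 := Finset.sum_le_sum fun i _ => by
        rw [Real.norm_eq_abs]
        exact pow_le_pow_left₀ (abs_nonneg _) (h i) 2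
    _ = d * r^2 := by rw [Finset.sum_const, Finset.card_univ, Fintype.card_fin, nsmul_eq_mul]

lemma tendsto_bmT : Tendsto bmT atTop (𝓝[>] (0:ℝ)) := by
  rw [tendsto_nhdsWithin_iff]
  constructor
  · have h1 : Tendsto (fun n : ℕ => ((n:ℝ)^2)) atTop atTop :=
      (tendsto_pow_atTop two_ne_zero).comp tendsto_natCast_atTop_atTop
    have h2 : Tendsto (fun n : ℕ => -((n:ℝ)^2)) atTop atBot := tendsto_neg_atBot_iff.2 h1
    have h3 := Real.tendsto_exp_atBot.comp h2
    convert h3 using 1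
    funext n
    rw [bmT]
    rfl
  · exact Eventually.of_forall fun n => bmT_pos n

end Deterministic

lemma quad_bound {d : ℕ} (β : Matrix (Fin d) (Fin d) ℝ) (y : EuclideanSpace ℝ (Fin d)) :
    |⟪y, eApply β y⟫| ≤ opNorm β * ‖y‖^2 := by
  have h1 : eApply β y = Matrix.toEuclideanCLM (𝕜 := ℝ) β y := by
    rw [eApply, ← Matrix.toLin'_apply]
    rfl
  calc |⟪y, eApply β y⟫| ≤ ‖y‖ * ‖eApply β y‖ := abs_real_inner_le_norm _ _
    _ ≤ ‖y‖ * (opNorm β * ‖y‖) := by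
        apply mul_le_mul_of_nonneg_left _ (norm_nonneg y)
        rw [h1, opNorm]
        exact (Matrix.toEuclideanCLM (𝕜 := ℝ) β).le_opNorm y
    _ = opNorm β * ‖y‖^2 := by ring


/-- Lemma 3.5: for a `d`-dimensional Brownian motion `W` and any `β ∈ M^d`, almost surely
`liminf_{t↘0} (1/t)|W(t)ᵀ β W(t)| = 0`. -/
theorem liminf_quadratic_form_brownian
    {Ω : Type*} [MeasureSpace Ω] [IsProbabilityMeasure (ℙ : Measure Ω)] {d : ℕ}
    (W : ℝ → Ω → EuclideanSpace ℝ (Fin d)) (hW : IsBMVec d W)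
    (β : Matrix (Fin d) (Fin d) ℝ) :
    ∀ᵐ ω ∂ℙ, Filter.liminf (fun t => |⟪W t ω, eApply β (W t ω)⟫| / t) (𝓝[>] 0) = 0 := by
  have hkmain : ∀ k : ℕ, ∀ᵐ ω ∂(ℙ : Measure Ω), ∃ᶠ t in 𝓝[>] (0:ℝ),
      |⟪W t ω, eApply β (W t ω)⟫| / t ≤ opNorm β * (1/((k:ℝ)+1)) := by
    intro k
    set ε : ℝ := 1/((k:ℝ)+1) with hεdef
    have hεpos : 0 < ε := by positivity
    set b : ℝ := Real.sqrt (ε / (4*((d:ℝ)+1))) with hbdef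
    have hb : 0 < b := Real.sqrt_pos.2 (by positivity)
    filter_upwards [ae_frequently_B hW hb, ae_eventually_notC hW hb] with ω hB hC
    have hfreq : ∃ᶠ n in atTop, ω ∈ Bset W b n ∧ ω ∉ Cset W b n := hB.and_eventually hC
    have hgood : ∀ n : ℕ, ω ∈ Bset W b n → ω ∉ Cset W b n →
        |⟪W (bmT n) ω, eApply β (W (bmT n) ω)⟫| / bmT n ≤ opNorm β * ε := by
      intro n hBn hCn
      have hcoord : ∀ i : Fin d, |W (bmT n) ω i| ≤ 2 * (b * bmS n) := by
        intro i
        have hE : |W (bmT n) ω i - W (bmT (n+1)) ω i| ≤ b * bmS n := Set.mem_iInter.1 hBn i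
        have hF : ¬ (b * bmS n < |W (bmT (n+1)) ω i|) := fun h => hCn (Set.mem_iUnion.2 ⟨i, h⟩)
        push_neg at hF
        calc |W (bmT n) ω i|
            = |(W (bmT n) ω i - W (bmT (n+1)) ω i) + W (bmT (n+1)) ω i| := by
              rw [sub_add_cancel]
          _ ≤ |W (bmT n) ω i - W (bmT (n+1)) ω i| + |W (bmT (n+1)) ω i| := abs_add_le _ _
          _ ≤ b * bmS n + b * bmS n := add_le_add hE hF
          _ = 2 * (b * bmS n) := by ring
      have hnormsq : ‖W (bmT n) ω‖^2 ≤ ε * bmT n := by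
        have hstep : 4*(d:ℝ)*(ε/(4*((d:ℝ)+1))) ≤ ε := by
          have hd : (0:ℝ) ≤ d := Nat.cast_nonneg d
          have h1 : 4*(d:ℝ)*(ε/(4*((d:ℝ)+1))) = ε * ((d:ℝ)/((d:ℝ)+1)) := by
            field_simp
          rw [h1]
          calc ε * ((d:ℝ)/((d:ℝ)+1)) ≤ ε * 1 := by
                apply mul_le_mul_of_nonneg_left _ hεpos.le
                rw [div_le_one (by positivity)]
                linarith
            _ = ε := mul_one ε
        calc ‖W (bmT n) ω‖^2 ≤ d * (2*(b*bmS n))^2 := norm_sq_le_of_coords hcoord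
          _ = 4 * d * b^2 * bmS n^2 := by ring
          _ = 4 * d * (ε/(4*((d:ℝ)+1))) * bmT n := by
              rw [bmS_sq, hbdef, Real.sq_sqrt (by positivity)]
          _ ≤ ε * bmT n := mul_le_mul_of_nonneg_right hstep (bmT_pos n).le
      rw [div_le_iff₀ (bmT_pos n)]
      calc |⟪W (bmT n) ω, eApply β (W (bmT n) ω)⟫|
          ≤ opNorm β * ‖W (bmT n) ω‖^2 := quad_bound β _
        _ ≤ opNorm β * (ε * bmT n) := mul_le_mul_of_nonneg_left hnormsq (norm_nonneg _)
        _ = opNorm β * ε * bmT n := by ring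
    have hfreq2 : ∃ᶠ n in atTop,
        |⟪W (bmT n) ω, eApply β (W (bmT n) ω)⟫| / bmT n ≤ opNorm β * ε :=
      hfreq.mono fun n hn => hgood n hn.1 hn.2
    exact tendsto_bmT.frequently hfreq2
  filter_upwards [ae_all_iff.2 hkmain] with ω hω
  have hnonneg : ∀ᶠ t in 𝓝[>] (0:ℝ), 0 ≤ |⟪W t ω, eApply β (W t ω)⟫| / t := by
    filter_upwards [self_mem_nhdsWithin] with t ht
    exact div_nonneg (abs_nonneg _) (le_of_lt ht)
  have hbdd : IsBoundedUnder (· ≥ ·) (𝓝[>] (0:ℝ))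
      (fun t => |⟪W t ω, eApply β (W t ω)⟫| / t) := ⟨0, eventually_map.2 hnonneg⟩
  have hcob : IsCoboundedUnder (· ≥ ·) (𝓝[>] (0:ℝ))
      (fun t => |⟪W t ω, eApply β (W t ω)⟫| / t) :=
    IsCoboundedUnder.of_frequently_le (hω 0)
  apply le_antisymm
  · have key : ∀ k : ℕ, liminf (fun t => |⟪W t ω, eApply β (W t ω)⟫| / t) (𝓝[>] (0:ℝ))
        ≤ opNorm β * (1/((k:ℝ)+1)) := fun k => liminf_le_of_frequently_le (hω k) hbdd
    by_contra hcon
    push_neg at hcon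
    set L := liminf (fun t => |⟪W t ω, eApply β (W t ω)⟫| / t) (𝓝[>] (0:ℝ)) with hL
    obtain ⟨k, hk⟩ := exists_nat_gt (opNorm β / L)
    have hk1 : (0:ℝ) < (k:ℝ)+1 := by positivity
    have h1 : L ≤ opNorm β / ((k:ℝ)+1) := by
      have := key k
      rwa [mul_one_div] at this
    have h2 : L * ((k:ℝ)+1) ≤ opNorm β := (le_div_iff₀ hk1).1 h1
    rw [div_lt_iff₀ hcon] at hk
    nlinarith
  · exact le_liminf_of_le hcob hnonneg


end
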